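/- Let W be a binary-input channel with output density matrices φ_0, φ_1 and define the trace distance δ(W) = ½‖φ_0 − φ_1‖₁ and the fidelity F(W) = F(φ_0, φ_1) = ‖√φ_0 √φ_1‖₁. For the dual channel whose outputs are purifications: if |θ_0⟩, |θ_1⟩ are purifications of the dual channel outputs constructed as |θ_x⟩ = (1/√2) ∑_{z∈{0,1}} (−1)^{xz} |z⟩_C ⊗ |φ_z⟩_{BD} (with |φ_z⟩ purifications of φ_z), then the fidelity of the dual outputs (tracing out B) satisfies F(Tr_B θ_0, Tr_B θ_1) = max_U ½|Tr[U(φ_0 − φ_1)]| = δ(W), where the max is over unitaries on B. -/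

import Mathlib

open scoped ComplexOrder Classical

/-- The positive semidefinite square root of a positive semidefinite matrix, as
`Matrix.PosSemidef.sqrt` was defined in the older Mathlib. -/
noncomputable def Matrix.PosSemidef.oldSqrt {n : Type*} [Fintype n] [DecidableEq n]
    {A : Matrix n n ℂ} (hA : A.PosSemidef) : Matrix n n ℂ :=
  (hA.1.eigenvectorUnitary : Matrix n n ℂ) *
    Matrix.diagonal ((↑) ∘ (Real.sqrt ·) ∘ hA.1.eigenvalues) *
    (star hA.1.eigenvectorUnitary : Matrix n n ℂ)

/-- Square root of a positive semidefinite matrix (junk value `0` otherwise). -/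
noncomputable def psdSqrt {m : Type*} [Fintype m] [DecidableEq m]
    (A : Matrix m m ℂ) : Matrix m m ℂ :=
  if h : A.PosSemidef then Matrix.PosSemidef.oldSqrt h else 0

/-- Trace norm `‖A‖₁ = Tr √(AᴴA)`. -/
noncomputable def traceNorm {m : Type*} [Fintype m] [DecidableEq m]
    (A : Matrix m m ℂ) : ℝ :=
  ((Matrix.PosSemidef.oldSqrt (Matrix.posSemidef_conjTranspose_mul_self A)).trace).re

/-- Fidelity `F(ρ,σ) = ‖√ρ√σ‖₁` of two (positive semidefinite) matrices. -/
noncomputable def fid {m : Type*} [Fintype m] [DecidableEq m]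
    (ρ σ : Matrix m m ℂ) : ℝ :=
  traceNorm (psdSqrt ρ * psdSqrt σ)

section OldSqrtAPI
open scoped MatrixOrder

lemma Matrix.PosSemidef.oldSqrt_eq_cfcSqrt {n : Type*} [Fintype n] [DecidableEq n]
    {A : Matrix n n ℂ} (hA : A.PosSemidef) : hA.oldSqrt = CFC.sqrt A := by
  rw [CFC.sqrt_eq_cfc, cfc_nnreal_eq_real _ A hA.nonneg, hA.1.cfc_eq]
  simp only [Matrix.IsHermitian.cfc, Matrix.PosSemidef.oldSqrt, Real.coe_sqrt, Real.coe_toNNReal']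
  simp [Unitary.conjStarAlgAut_apply]
  congr 3
  funext i
  simp only [Function.comp_apply, max_eq_left (hA.eigenvalues_nonneg i)]

lemma Matrix.PosSemidef.posSemidef_sqrt {n : Type*} [Fintype n] [DecidableEq n]
    {A : Matrix n n ℂ} (hA : A.PosSemidef) : hA.oldSqrt.PosSemidef := by
  rw [hA.oldSqrt_eq_cfcSqrt]
  exact Matrix.nonneg_iff_posSemidef.mp (CFC.sqrt_nonneg A)

lemma Matrix.PosSemidef.sq_sqrt {n : Type*} [Fintype n] [DecidableEq n]
    {A : Matrix n n ℂ} (hA : A.PosSemidef) : hA.oldSqrt ^ 2 = A := by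
  rw [hA.oldSqrt_eq_cfcSqrt]
  exact CFC.sq_sqrt A hA.nonneg

lemma Matrix.PosSemidef.sqrt_mul_self {n : Type*} [Fintype n] [DecidableEq n]
    {A : Matrix n n ℂ} (hA : A.PosSemidef) : hA.oldSqrt * hA.oldSqrt = A := by
  rw [hA.oldSqrt_eq_cfcSqrt]
  exact CFC.sqrt_mul_sqrt_self A hA.nonneg

lemma Matrix.PosSemidef.eq_sqrt_of_sq_eq {n : Type*} [Fintype n] [DecidableEq n]
    {A B : Matrix n n ℂ} (hB : B.PosSemidef) (hA : A.PosSemidef) (h : B ^ 2 = A) :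
    B = hA.oldSqrt := by
  rw [hA.oldSqrt_eq_cfcSqrt, eq_comm, CFC.sqrt_eq_iff A B hA.nonneg hB.nonneg, ← sq, h]

end OldSqrtAPI


open Matrix

variable {n : Type*} [Fintype n] [DecidableEq n]

lemma mulUDU (U : Matrix.unitaryGroup n ℂ) (d e : n → ℂ) :
    ((U : Matrix n n ℂ) * diagonal d * star (U : Matrix n n ℂ)) *
      ((U : Matrix n n ℂ) * diagonal e * star (U : Matrix n n ℂ)) =
    (U : Matrix n n ℂ) * diagonal (d * e) * star (U : Matrix n n ℂ) := by
  have h1 : star (U : Matrix n n ℂ) * (U : Matrix n n ℂ) = 1 :=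
    Matrix.UnitaryGroup.star_mul_self U
  calc ((U : Matrix n n ℂ) * diagonal d * star (U : Matrix n n ℂ)) *
      ((U : Matrix n n ℂ) * diagonal e * star (U : Matrix n n ℂ))
      = (U : Matrix n n ℂ) * diagonal d * (star (U : Matrix n n ℂ) * (U : Matrix n n ℂ)) *
        diagonal e * star (U : Matrix n n ℂ) := by noncomm_ring
    _ = (U : Matrix n n ℂ) * (diagonal d * diagonal e) * star (U : Matrix n n ℂ) := by
        rw [h1]; noncomm_ring
    _ = _ := by rw [diagonal_mul_diagonal]; rfl

lemma traceUDU (U : Matrix.unitaryGroup n ℂ) (d : n → ℂ) :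
    ((U : Matrix n n ℂ) * diagonal d * star (U : Matrix n n ℂ)).trace = ∑ i, d i := by
  rw [Matrix.trace_mul_cycle, Matrix.UnitaryGroup.star_mul_self U,
    Matrix.one_mul, Matrix.trace_diagonal]

lemma psdUDU (U : Matrix.unitaryGroup n ℂ) (f : n → ℝ) (hf : ∀ i, 0 ≤ f i) :
    Matrix.PosSemidef ((U : Matrix n n ℂ) * diagonal ((↑) ∘ f) * star (U : Matrix n n ℂ)) := by
  have hd : Matrix.PosSemidef (diagonal ((↑) ∘ f) : Matrix n n ℂ) :=
    Matrix.PosSemidef.diagonal fun i =>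
      by simpa using Complex.zero_le_real.2 (hf i)
  exact hd.mul_mul_conjTranspose_same (U : Matrix n n ℂ)

lemma sqrtUDU {H : Matrix n n ℂ} (hH : H.PosSemidef) (U : Matrix.unitaryGroup n ℂ)
    (f : n → ℝ) (hf : ∀ i, 0 ≤ f i)
    (hHe : H = (U : Matrix n n ℂ) * diagonal ((↑) ∘ f) * star (U : Matrix n n ℂ)) :
    hH.oldSqrt = (U : Matrix n n ℂ) * diagonal ((↑) ∘ Real.sqrt ∘ f) * star (U : Matrix n n ℂ) := by
  refine ((psdUDU U (Real.sqrt ∘ f) fun i => Real.sqrt_nonneg _).eq_sqrt_of_sq_eq hH ?_).symm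
  rw [pow_two, mulUDU, hHe]
  have : ((↑) ∘ Real.sqrt ∘ f : n → ℂ) * ((↑) ∘ Real.sqrt ∘ f) = (↑) ∘ f := by
    funext i
    simp only [Pi.mul_apply, Function.comp_apply, ← Complex.ofReal_mul,
      Real.mul_self_sqrt (hf i)]
  rw [this]

lemma compMul {q : Type*} (f g : q → ℝ) :
    ((↑) ∘ f : q → ℂ) * ((↑) ∘ g) = (↑) ∘ (f * g) :=
  funext fun i => (Complex.ofReal_mul _ _).symm

lemma diagCongr {q : Type*} [DecidableEq q] {f g : q → ℝ} (h : ∀ i, f i = g i) :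
    (diagonal ((↑) ∘ f) : Matrix q q ℂ) = diagonal ((↑) ∘ g) := by
  exact congrArg diagonal (funext fun i => congrArg Complex.ofReal (h i))

lemma trace_sqrt_comm {p q : Type*} [Fintype p] [DecidableEq p] [Fintype q] [DecidableEq q]
    (X : Matrix p q ℂ) :
    (Matrix.posSemidef_conjTranspose_mul_self X).oldSqrt.trace =
    (Matrix.posSemidef_self_mul_conjTranspose X).oldSqrt.trace := by
  have hH := Matrix.posSemidef_conjTranspose_mul_self X
  set U := hH.1.eigenvectorUnitary with hU
  set l := hH.1.eigenvalues with hldef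
  have hl : ∀ i, 0 ≤ l i := hH.eigenvalues_nonneg
  have hspec : Xᴴ * X = (U : Matrix q q ℂ) * diagonal ((↑) ∘ l) * star (U : Matrix q q ℂ) :=
    hH.1.spectral_theorem
  set g : q → ℝ := fun i => if l i = 0 then 0 else (Real.sqrt (l i))⁻¹ with hg
  have hgnn : ∀ i, 0 ≤ g i := by
    intro i
    rw [hg]
    dsimp only
    split <;> positivity
  set K := (U : Matrix q q ℂ) * diagonal ((↑) ∘ g) * star (U : Matrix q q ℂ) with hK
  have hKpsd : K.PosSemidef := psdUDU U g hgnn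
  set T := X * K * Xᴴ with hT
  have hTpsd : T.PosSemidef := hKpsd.mul_mul_conjTranspose_same X
  set pf : q → ℝ := fun i => if l i = 0 then 0 else 1 with hpf
  have hsq : ∀ i, l i ≠ 0 → Real.sqrt (l i) ≠ 0 := fun i h => by
    simpa [Real.sqrt_eq_zero' ] using lt_of_le_of_ne (hl i) (Ne.symm h)
  set P := (U : Matrix q q ℂ) * diagonal ((↑) ∘ pf) * star (U : Matrix q q ℂ) with hP
  have hKHK : K * (Xᴴ * X) * K = P := by
    rw [hspec, hK, hP, mulUDU, mulUDU, compMul, compMul]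
    congr 2
    apply diagCongr
    intro i
    by_cases h : l i = 0
    · simp [hg, hpf, h]
    · have hs := hsq i h
      simp only [Pi.mul_apply, hg, hpf, if_neg h]
      field_simp
      rw [Real.sq_sqrt (hl i)]
  have hPH : P * (Xᴴ * X) = Xᴴ * X := by
    rw [hspec, hP, mulUDU, compMul]
    congr 2
    apply diagCongr
    intro i
    by_cases h : l i = 0 <;> simp [hpf, h]
  have hHP : (Xᴴ * X) * P = Xᴴ * X := by
    rw [hspec, hP, mulUDU, compMul]
    congr 2
    apply diagCongr
    intro i
    by_cases h : l i = 0 <;> simp [hpf, h]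
  have hXP : X * P = X := by
    have hPH' : Pᴴ = P := (psdUDU U pf fun i => by by_cases h : l i = 0 <;> simp [hpf, h]).1
    have hzero : (X * P - X)ᴴ * (X * P - X) = 0 := by
      have e1 : (X * P - X)ᴴ * (X * P - X)
          = Pᴴ * (Xᴴ * X) * P - Pᴴ * (Xᴴ * X) - (Xᴴ * X) * P + Xᴴ * X := by
        simp only [Matrix.conjTranspose_sub, Matrix.conjTranspose_mul, Matrix.sub_mul,
          Matrix.mul_sub, Matrix.mul_assoc]
        abel
      rw [e1, hPH', hPH, hHP]
      abel
    exact sub_eq_zero.mp (Matrix.conjTranspose_mul_self_eq_zero.mp hzero)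
  have hT2 : T ^ 2 = X * Xᴴ := by
    have e2 : T ^ 2 = X * (K * (Xᴴ * X) * K) * Xᴴ := by
      rw [pow_two, hT]
      simp only [Matrix.mul_assoc]
    rw [e2, hKHK, hXP]
  have hsqrtT : T = (Matrix.posSemidef_self_mul_conjTranspose X).oldSqrt :=
    hTpsd.eq_sqrt_of_sq_eq _ hT2
  have hlhs : (Matrix.posSemidef_conjTranspose_mul_self X).oldSqrt.trace
      = ∑ i, (Real.sqrt (l i) : ℂ) := by
    rw [sqrtUDU hH U l hl hspec, traceUDU]
    rfl
  have hrhs : T.trace = ∑ i, (Real.sqrt (l i) : ℂ) := by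
    rw [hT, Matrix.trace_mul_cycle, hspec, hK, mulUDU, compMul, traceUDU]
    apply Finset.sum_congr rfl
    intro i _
    simp only [Function.comp_apply, Pi.mul_apply, Complex.ofReal_inj]
    by_cases h : l i = 0
    · simp [hg, h]
    · have hs := hsq i h
      simp only [hg, if_neg h]
      field_simp
      rw [Real.sq_sqrt (hl i)]
  rw [hlhs, ← hsqrtT, hrhs]

lemma sqrt_congr {M N : Matrix n n ℂ} (hM : M.PosSemidef) (hN : N.PosSemidef)
    (h : M = N) : hM.oldSqrt = hN.oldSqrt := by subst h; rfl

lemma traceNorm_eq {m : Type*} [Fintype m] [DecidableEq m] {M P : Matrix m m ℂ}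
    (hP : P.PosSemidef) (h : Mᴴ * M = P) : traceNorm M = hP.oldSqrt.trace.re := by
  unfold traceNorm
  rw [sqrt_congr _ hP h]

lemma traceNorm_key {m : Type*} [Fintype m] [DecidableEq m] (X : Matrix m m ℂ) :
    traceNorm X = ((Matrix.posSemidef_self_mul_conjTranspose X).oldSqrt.trace).re :=
  congrArg Complex.re (trace_sqrt_comm X)

lemma traceNorm_conjTranspose {m : Type*} [Fintype m] [DecidableEq m] (X : Matrix m m ℂ) :
    traceNorm Xᴴ = traceNorm X := by
  rw [traceNorm_eq (Matrix.posSemidef_self_mul_conjTranspose X) (by rw [Matrix.conjTranspose_conjTranspose]),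
    traceNorm_key]

lemma sqrt_transpose {P : Matrix n n ℂ} (hP : P.PosSemidef) :
    (hP.transpose).oldSqrt = hP.oldSqrt.transpose :=
  ((hP.posSemidef_sqrt.transpose).eq_sqrt_of_sq_eq hP.transpose
    (by rw [pow_two, ← Matrix.transpose_mul, ← pow_two, hP.sq_sqrt])).symm

lemma traceNorm_transpose {m : Type*} [Fintype m] [DecidableEq m] (X : Matrix m m ℂ) :
    traceNorm Xᵀ = traceNorm X := by
  have h : Xᵀᴴ * Xᵀ = (X * Xᴴ)ᵀ := by
    ext i j
    simp only [Matrix.mul_apply, Matrix.conjTranspose_apply, Matrix.transpose_apply]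
    exact Finset.sum_congr rfl fun k _ => mul_comm _ _
  rw [traceNorm_eq ((Matrix.posSemidef_self_mul_conjTranspose X).transpose) h,
    sqrt_transpose, Matrix.trace_transpose, traceNorm_key]

lemma psd_smul {P : Matrix n n ℂ} (hP : P.PosSemidef) {c : ℝ} (hc : 0 ≤ c) :
    ((c : ℂ) • P).PosSemidef := by
  constructor
  · show ((c : ℂ) • P)ᴴ = (c : ℂ) • P
    rw [Matrix.conjTranspose_smul, hP.1.eq]
    congr 1
    exact Complex.conj_ofReal c
  · intro x
    exact (hP.smul (a := (c : ℂ)) (Complex.zero_le_real.2 hc)).2 x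

lemma traceNorm_smul {m : Type*} [Fintype m] [DecidableEq m] (X : Matrix m m ℂ)
    {c : ℝ} (hc : 0 ≤ c) : traceNorm ((c : ℂ) • X) = c * traceNorm X := by
  have h : ((c : ℂ) • X)ᴴ * ((c : ℂ) • X) = ((c * c : ℝ) : ℂ) • (Xᴴ * X) := by
    rw [Matrix.conjTranspose_smul]
    simp [Matrix.smul_mul, Matrix.mul_smul, Complex.conj_ofReal, smul_smul,
      Complex.ofReal_mul]
    norm_cast
  have hP := psd_smul (Matrix.posSemidef_conjTranspose_mul_self X) (mul_nonneg hc hc)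
  have hsq : ((c : ℂ) • (Matrix.posSemidef_conjTranspose_mul_self X).oldSqrt) = hP.oldSqrt := by
    apply Matrix.PosSemidef.eq_sqrt_of_sq_eq
    · exact psd_smul (Matrix.posSemidef_conjTranspose_mul_self X).posSemidef_sqrt hc
    · rw [smul_pow, Matrix.PosSemidef.sq_sqrt, sq]
      norm_cast
  rw [traceNorm_eq hP h, ← hsq, Matrix.trace_smul, smul_eq_mul, Complex.re_ofReal_mul]
  rfl

lemma traceNorm_hermitian {m : Type*} [Fintype m] [DecidableEq m] {M : Matrix m m ℂ}
    (hM : M.IsHermitian) : traceNorm M = ∑ i, |hM.eigenvalues i| := by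
  set V := hM.eigenvectorUnitary with hV
  set l := hM.eigenvalues with hl
  have hspec : M = (V : Matrix m m ℂ) * diagonal ((↑) ∘ l) * star (V : Matrix m m ℂ) :=
    hM.spectral_theorem
  have h : Mᴴ * M = (V : Matrix m m ℂ) * diagonal ((↑) ∘ (l * l)) * star (V : Matrix m m ℂ) := by
    rw [hM.eq]
    conv_lhs => rw [hspec]
    rw [mulUDU, compMul]
  have hP := psdUDU V (l * l) (fun i => mul_self_nonneg _)
  rw [traceNorm_eq hP h, sqrtUDU hP V (l * l) (fun i => mul_self_nonneg _) rfl, traceUDU]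
  rw [Complex.re_sum]
  apply Finset.sum_congr rfl
  intro i _
  simp [Real.sqrt_mul_self_eq_abs]

lemma unitary_entry_le_one {m : Type*} [Fintype m] [DecidableEq m]
    {W : Matrix m m ℂ} (hW : W ∈ Matrix.unitaryGroup m ℂ) (i : m) :
    ‖W i i‖ ≤ 1 := by
  have h1 : star W * W = 1 := (Matrix.mem_unitaryGroup_iff').mp hW
  have h2 : (star W * W) i i = 1 := by rw [h1]; simp
  have h3 : ∑ k, Complex.normSq (W k i) = 1 := by
    have h2' : (∑ k, (starRingEnd ℂ) (W k i) * W k i) = 1 := by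
      have h := congrFun (congrFun h1 i) i
      simpa [Matrix.mul_apply, Matrix.star_apply, Matrix.one_apply] using h
    calc ∑ k, Complex.normSq (W k i)
        = (∑ k, (starRingEnd ℂ) (W k i) * W k i).re := by
          rw [Complex.re_sum]
          exact Finset.sum_congr rfl fun k _ => by
            rw [mul_comm, Complex.mul_conj, Complex.ofReal_re]
      _ = 1 := by rw [h2']; rfl
  have h4 : Complex.normSq (W i i) ≤ 1 := by
    rw [← h3]
    exact Finset.single_le_sum (f := fun k => Complex.normSq (W k i))
      (fun k _ => Complex.normSq_nonneg _) (Finset.mem_univ i)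
  calc ‖W i i‖ = Real.sqrt (Complex.normSq (W i i)) := by rw [Complex.norm_def]
    _ ≤ Real.sqrt 1 := Real.sqrt_le_sqrt h4
    _ = 1 := Real.sqrt_one

lemma trace_mul_diag {m : Type*} [Fintype m] [DecidableEq m]
    (W : Matrix m m ℂ) (d : m → ℂ) :
    (W * diagonal d).trace = ∑ i, W i i * d i := by
  simp [Matrix.trace, Matrix.diag, Matrix.mul_apply, Matrix.diagonal_apply,
    Finset.sum_ite_eq]

lemma herm_isGreatest {m : Type*} [Fintype m] [DecidableEq m] {M : Matrix m m ℂ}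
    (hM : M.IsHermitian) :
    IsGreatest {x : ℝ | ∃ U ∈ Matrix.unitaryGroup m ℂ,
        x = (1/2) * ‖(U * M).trace‖} ((1/2) * traceNorm M) := by
  set V := hM.eigenvectorUnitary with hV
  set l := hM.eigenvalues with hldef
  have hspec : M = (V : Matrix m m ℂ) * diagonal ((↑) ∘ l) * star (V : Matrix m m ℂ) :=
    hM.spectral_theorem
  constructor
  · -- membership : optimal unitary
    set s : m → ℂ := fun i => if 0 ≤ l i then 1 else -1 with hs
    have hss : s * star s = 1 := by
      funext i
      by_cases h : 0 ≤ l i <;> simp [hs, h]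
    set Umax := (V : Matrix m m ℂ) * diagonal s * star (V : Matrix m m ℂ) with hUmax
    have hstar : star Umax = (V : Matrix m m ℂ) * diagonal (star s) * star (V : Matrix m m ℂ) := by
      rw [hUmax, Matrix.star_mul, Matrix.star_mul, star_star, ← Matrix.mul_assoc,
        Matrix.star_eq_conjTranspose (diagonal s), Matrix.diagonal_conjTranspose]
    have hmem : Umax ∈ Matrix.unitaryGroup m ℂ := by
      rw [Matrix.mem_unitaryGroup_iff, hstar, hUmax, mulUDU, hss]
      have hd1 : diagonal (1 : m → ℂ) = (1 : Matrix m m ℂ) := Matrix.diagonal_one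
      rw [hd1, Matrix.mul_one]
      simpa using Matrix.mem_unitaryGroup_iff.mp V.2
    refine ⟨Umax, hmem, ?_⟩
    have htr : (Umax * M).trace = ((∑ i, |l i| : ℝ) : ℂ) := by
      rw [hspec, hUmax, mulUDU, traceUDU]
      push_cast
      apply Finset.sum_congr rfl
      intro i _
      by_cases h : 0 ≤ l i
      · simp [hs, h, abs_of_nonneg h]
      · simp [hs, h, abs_of_neg (lt_of_not_ge h)]
    rw [htr, Complex.norm_real, Real.norm_eq_abs, abs_of_nonneg (Finset.sum_nonneg fun i _ => abs_nonneg _),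
      traceNorm_hermitian hM]
  · -- upper bound
    rintro x ⟨U, hU, rfl⟩
    set W := star (V : Matrix m m ℂ) * U * (V : Matrix m m ℂ) with hW
    have hWmem : W ∈ Matrix.unitaryGroup m ℂ :=
      Submonoid.mul_mem _ (Submonoid.mul_mem _ (Unitary.star_mem V.2) hU) V.2
    have htr : (U * M).trace = (W * diagonal (Complex.ofReal ∘ l)).trace := by
      rw [hspec]
      rw [show U * ((V : Matrix m m ℂ) * diagonal (Complex.ofReal ∘ l) * star (V : Matrix m m ℂ))
          = (U * (V : Matrix m m ℂ) * diagonal (Complex.ofReal ∘ l)) * star (V : Matrix m m ℂ) by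
        simp only [Matrix.mul_assoc]]
      rw [Matrix.trace_mul_comm, hW]
      simp only [Matrix.mul_assoc]
    rw [htr, trace_mul_diag]
    have hineq : ‖∑ i, W i i * (Complex.ofReal ∘ l) i‖ ≤ ∑ i, |l i| := by
      refine le_trans (norm_sum_le _ _) ?_
      apply Finset.sum_le_sum
      intro i _
      rw [norm_mul]
      simp only [Function.comp_apply, Complex.norm_real, Real.norm_eq_abs]
      calc ‖W i i‖ * |l i| ≤ 1 * |l i| :=
            mul_le_mul_of_nonneg_right (unitary_entry_le_one hWmem i) (abs_nonneg _)
        _ = |l i| := one_mul _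
    rw [traceNorm_hermitian hM]
    have h2 : (0:ℝ) < 2 := by norm_num
    calc (1/2) * ‖∑ i, W i i * (Complex.ofReal ∘ l) i‖ ≤ (1/2) * ∑ i, |l i| := by
          linarith [hineq]
      _ = 1/2 * ∑ i, |hM.eigenvalues i| := rfl

lemma fid_eq {nn bb : Type*} [Fintype nn] [DecidableEq nn] [Fintype bb] [DecidableEq bb]
    (A B : Matrix nn bb ℂ) : fid (A * Aᴴ) (B * Bᴴ) = traceNorm (Aᴴ * B) := by
  have hρ := Matrix.posSemidef_self_mul_conjTranspose A
  have hσ := Matrix.posSemidef_self_mul_conjTranspose B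
  have h1 : psdSqrt (A * Aᴴ) = hρ.oldSqrt := dif_pos hρ
  have h2 : psdSqrt (B * Bᴴ) = hσ.oldSqrt := dif_pos hσ
  rw [fid, h1, h2]
  have hYY : (hρ.oldSqrt * hσ.oldSqrt)ᴴ * (hρ.oldSqrt * hσ.oldSqrt) = (hσ.oldSqrt * A) * (hσ.oldSqrt * A)ᴴ := by
    rw [Matrix.conjTranspose_mul, Matrix.conjTranspose_mul, hρ.posSemidef_sqrt.1.eq,
      hσ.posSemidef_sqrt.1.eq]
    calc hσ.oldSqrt * hρ.oldSqrt * (hρ.oldSqrt * hσ.oldSqrt)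
        = hσ.oldSqrt * (hρ.oldSqrt * hρ.oldSqrt) * hσ.oldSqrt := by simp only [Matrix.mul_assoc]
      _ = hσ.oldSqrt * (A * Aᴴ) * hσ.oldSqrt := by rw [hρ.sqrt_mul_self]
      _ = hσ.oldSqrt * A * (Aᴴ * hσ.oldSqrt) := by simp only [Matrix.mul_assoc]
  have hZZ : (hσ.oldSqrt * A)ᴴ * (hσ.oldSqrt * A) = (Aᴴ * B) * (Aᴴ * B)ᴴ := by
    rw [Matrix.conjTranspose_mul, Matrix.conjTranspose_mul, hσ.posSemidef_sqrt.1.eq,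
      Matrix.conjTranspose_conjTranspose]
    calc Aᴴ * hσ.oldSqrt * (hσ.oldSqrt * A)
        = Aᴴ * (hσ.oldSqrt * hσ.oldSqrt) * A := by simp only [Matrix.mul_assoc]
      _ = Aᴴ * (B * Bᴴ) * A := by rw [hσ.sqrt_mul_self]
      _ = Aᴴ * B * (Bᴴ * A) := by simp only [Matrix.mul_assoc]
  rw [traceNorm]
  rw [sqrt_congr _ (Matrix.posSemidef_self_mul_conjTranspose (hσ.oldSqrt * A)) hYY,
    ← trace_sqrt_comm (hσ.oldSqrt * A),
    sqrt_congr _ (Matrix.posSemidef_self_mul_conjTranspose (Aᴴ * B)) hZZ,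
    ← trace_sqrt_comm (Aᴴ * B)]
  rfl

/-- Duality of trace distance and fidelity (Proposition `deltaF`): for the
dual-channel outputs `Tr_B θ_x` built from purifications
`|θ_x⟩ = (1/√2) ∑_z (−1)^{xz} |z⟩_C |φ_z⟩_{BD}`, one has
`F(Tr_B θ_0, Tr_B θ_1) = max_U ½|Tr[U(φ_0 − φ_1)]| = δ(W)`. -/
theorem stmt_19 (b dd : ℕ)
    (φ : Bool → Matrix (Fin b) (Fin b) ℂ)
    (hφ : ∀ z, (φ z).PosSemidef) (hφtr : ∀ z, (φ z).trace = 1)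
    (u : Bool → (Fin b × Fin dd) → ℂ)
    (hu : ∀ z i j, φ z i j = ∑ δ : Fin dd, u z (i, δ) * star (u z (j, δ)))
    (θ : Bool → (Bool × Fin b × Fin dd) → ℂ)
    (hθ : ∀ x z β δ, θ x (z, β, δ) =
      (1 / (Real.sqrt 2 : ℂ)) * (if x && z then -1 else 1) * u z (β, δ))
    (τ : Bool → Matrix (Bool × Fin dd) (Bool × Fin dd) ℂ)
    (hτ : ∀ x, τ x = fun a c =>
      ∑ β : Fin b, θ x (a.1, β, a.2) * star (θ x (c.1, β, c.2))) :
    fid (τ false) (τ true) = (1/2) * traceNorm (φ false - φ true) ∧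
    IsGreatest
      {x : ℝ | ∃ U ∈ Matrix.unitaryGroup (Fin b) ℂ,
        x = (1/2) * ‖
          (((U : Matrix (Fin b) (Fin b) ℂ) * (φ false - φ true)).trace)‖}
      (fid (τ false) (τ true)) := by
  set A : Bool → Matrix (Bool × Fin dd) (Fin b) ℂ :=
    fun x => Matrix.of fun a β => θ x (a.1, β, a.2) with hA
  have hAA : ∀ x, τ x = A x * (A x)ᴴ := by
    intro x
    rw [hτ]
    ext a c
    simp [hA, Matrix.mul_apply, Matrix.conjTranspose_apply]
  set c : ℂ := 1 / (Real.sqrt 2 : ℂ) with hcdef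
  have hccc : star c = c := by
    rw [hcdef, star_div₀, star_one]
    congr 1
    exact Complex.conj_ofReal _
  have hcsq : c * c = ((1/2 : ℝ) : ℂ) := by
    rw [hcdef, div_mul_div_comm, one_mul, ← Complex.ofReal_mul,
      Real.mul_self_sqrt (by norm_num : (0:ℝ) ≤ 2)]
    norm_num
  have hsum : ∀ (z : Bool) (β β' : Fin b),
      ∑ δ : Fin dd, star (u z (β, δ)) * u z (β', δ) = φ z β' β := by
    intro z β β'
    rw [hu z β' β]
    exact Finset.sum_congr rfl fun δ _ => mul_comm _ _
  have hAB : (A false)ᴴ * (A true) = ((1/2 : ℝ) : ℂ) • (φ false - φ true)ᵀ := by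
    ext β β'
    rw [Matrix.mul_apply, Fintype.sum_prod_type, Fintype.sum_bool]
    have htrue : ∑ δ : Fin dd, (A false)ᴴ β (true, δ) * (A true) (true, δ) β'
        = -(((1/2 : ℝ) : ℂ) * φ true β' β) := by
      have e : ∀ δ, (A false)ᴴ β (true, δ) * (A true) (true, δ) β'
          = -(((1/2 : ℝ) : ℂ) * (star (u true (β, δ)) * u true (β', δ))) := by
        intro δ
        simp only [Matrix.conjTranspose_apply, hA, Matrix.of_apply]
        rw [hθ, hθ]
        simp only [Bool.false_and, Bool.true_and, Bool.false_eq_true, reduceIte, if_false, if_true]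
        rw [star_mul', star_mul', hccc, star_one]
        linear_combination (-(star (u true (β, δ)) * u true (β', δ))) * hcsq
      rw [Finset.sum_congr rfl fun δ _ => e δ, Finset.sum_neg_distrib, ← Finset.mul_sum,
        hsum true β β']
    have hfalse : ∑ δ : Fin dd, (A false)ᴴ β (false, δ) * (A true) (false, δ) β'
        = ((1/2 : ℝ) : ℂ) * φ false β' β := by
      have e : ∀ δ, (A false)ᴴ β (false, δ) * (A true) (false, δ) β'
          = ((1/2 : ℝ) : ℂ) * (star (u false (β, δ)) * u false (β', δ)) := by
        intro δ
        simp only [Matrix.conjTranspose_apply, hA, Matrix.of_apply]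
        rw [hθ, hθ]
        simp only [Bool.and_false, Bool.false_and, Bool.false_eq_true, reduceIte, if_false, if_true]
        rw [star_mul', star_mul', hccc, star_one]
        linear_combination (star (u false (β, δ)) * u false (β', δ)) * hcsq
      rw [Finset.sum_congr rfl fun δ _ => e δ, ← Finset.mul_sum, hsum false β β']
    rw [htrue, hfalse]
    simp only [Matrix.smul_apply, Matrix.sub_apply, Matrix.transpose_apply, smul_eq_mul]
    ring
  have hmain : fid (τ false) (τ true) = (1/2) * traceNorm (φ false - φ true) := by
    rw [hAA false, hAA true, fid_eq, hAB,
      traceNorm_smul _ (by norm_num : (0:ℝ) ≤ 1/2), traceNorm_transpose]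
  refine ⟨hmain, ?_⟩
  rw [hmain]
  exact herm_isGreatest (((hφ false).1).sub ((hφ true).1))
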